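/- Let q ≥ 2 and N ≥ 1 be integers, let G be a finite group of order (qN)², and let H be a finite group of order q with identity element 1. Let Σ be a set of (q−1)N subgroups of G, each of order qN, such that any two distinct members of Σ intersect in {1}. Suppose Σ is partitioned into q−1 subsets Σ_i of size N, indexed by the elements i ∈ H∖{1}. For i ∈ H∖{1} set D_i := (⋃ Σ_i) ∖ {1}, and set D_1 := G ∖ ⋃_{i≠1} D_i. Then the function f : G → H defined by f(x) = i for x ∈ D_i (for each i ∈ H) is bent; that is, for every z ∈ G with z ≠ 1 and every b ∈ H, the number of x ∈ G with f(xz)·f(x)⁻¹ = b equals qN². -/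

import Mathlib

lemma aux_existsUnique {G : Type*} [Group G] [Finite G] (X Y : Subgroup G)
    (hXY : X ⊓ Y = ⊥) (hcard : Nat.card X * Nat.card Y = Nat.card G) (z : G) :
    ∃! x : G, x ∈ X ∧ x * z ∈ Y := by
  have hinj : Function.Injective (fun p : X × Y => (p.1 : G)⁻¹ * (p.2 : G)) := by
    rintro ⟨a, c⟩ ⟨a', c'⟩ h
    simp only at h
    have h1 : (a' : G) * (a : G)⁻¹ = (c' : G) * (c : G)⁻¹ := by
      calc (a' : G) * (a : G)⁻¹ = (a':G) * ((a:G)⁻¹ * (c:G)) * (c:G)⁻¹ := by group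
        _ = (a':G) * ((a':G)⁻¹ * (c':G)) * (c:G)⁻¹ := by rw [h]
        _ = (c' : G) * (c : G)⁻¹ := by group
    have hmem : (a' : G) * (a : G)⁻¹ ∈ X ⊓ Y := by
      constructor
      · exact X.mul_mem a'.2 (X.inv_mem a.2)
      · rw [h1]; exact Y.mul_mem c'.2 (Y.inv_mem c.2)
    rw [hXY, Subgroup.mem_bot] at hmem
    have ha : (a' : G) = a := mul_inv_eq_one.mp hmem
    have hc : (c' : G) = c := by
      rw [h1] at hmem; exact mul_inv_eq_one.mp hmem
    ext <;> simp [ha, hc]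
  have hbij : Function.Bijective (fun p : X × Y => (p.1 : G)⁻¹ * (p.2 : G)) := by
    rw [Nat.bijective_iff_injective_and_card]
    exact ⟨hinj, by rw [Nat.card_prod, hcard]⟩
  obtain ⟨⟨a, c⟩, hp⟩ := hbij.surjective z
  simp only at hp
  refine ⟨(a : G), ⟨a.2, by rw [← hp]; simpa using c.2⟩, ?_⟩
  rintro x ⟨hx, hxz⟩
  have := hinj (a₁ := (⟨⟨x, hx⟩, ⟨x * z, hxz⟩⟩ : X × Y)) (a₂ := ⟨a, c⟩) (by simp [hp])
  have := congrArg (fun p : X × Y => ((p.1 : G))) this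
  simpa using this

set_option maxHeartbeats 3200000 in
theorem bent_of_partial_spread {G H : Type*} [Group G] [Fintype G] [Group H] [Fintype H]
    (q N : ℕ) (hq : 2 ≤ q) (hN : 1 ≤ N)
    (hG : Fintype.card G = (q * N) ^ 2) (hH : Fintype.card H = q)
    (S : H → Finset (Subgroup G))
    (hScard : ∀ i : H, i ≠ 1 → (S i).card = N)
    (hSdisj : ∀ i j : H, i ≠ 1 → j ≠ 1 → i ≠ j → Disjoint (S i) (S j))
    (hSorder : ∀ i : H, i ≠ 1 → ∀ X ∈ S i, Nat.card X = q * N)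
    (hSint : ∀ i j : H, i ≠ 1 → j ≠ 1 → ∀ X ∈ S i, ∀ Y ∈ S j, X ≠ Y → X ⊓ Y = ⊥)
    (D : H → Set G)
    (hD : ∀ i : H, i ≠ 1 → D i = (⋃ X ∈ S i, (X : Set G)) \ {1})
    (hD1 : D 1 = Set.univ \ ⋃ i ∈ {i : H | i ≠ 1}, D i)
    (f : G → H)
    (hf : ∀ i : H, ∀ x ∈ D i, f x = i) :
    ∀ z : G, z ≠ 1 → ∀ b : H,
      Nat.card {x : G | f (x * z) * (f x)⁻¹ = b} = q * N ^ 2 := by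
  intro z hz b
  classical
  -- basic numerics
  have hqN2 : 2 ≤ q * N := le_trans hq (Nat.le_mul_of_pos_right q (by omega))
  have hGcard : Nat.card G = (q * N) ^ 2 := by rw [Nat.card_eq_fintype_card, hG]
  -- uniqueness of spread membership
  have huniq : ∀ x : G, x ≠ 1 → ∀ (i j : H) (X Y : Subgroup G), i ≠ 1 → j ≠ 1 →
      X ∈ S i → Y ∈ S j → x ∈ X → x ∈ Y → i = j ∧ X = Y := by
    intro x hx i j X Y hi hj hXS hYS hxX hxY
    by_cases hXY : X = Y
    · subst hXY
      refine ⟨?_, rfl⟩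
      by_contra hij
      exact (Finset.disjoint_left.mp (hSdisj i j hi hj hij)) hXS hYS
    · have hbot := hSint i j hi hj X hXS Y hYS hXY
      have : x ∈ X ⊓ Y := ⟨hxX, hxY⟩
      rw [hbot, Subgroup.mem_bot] at this
      exact absurd this hx
  -- f values
  have hfval : ∀ (i : H) (X : Subgroup G), i ≠ 1 → X ∈ S i → ∀ x : G, x ∈ X → x ≠ 1 → f x = i := by
    intro i X hi hXS x hxX hx
    apply hf i
    rw [hD i hi]
    exact ⟨Set.mem_biUnion hXS hxX, hx⟩
  have hf1 : ∀ x : G, (∀ (i : H) (X : Subgroup G), i ≠ 1 → X ∈ S i → x ∈ X → x = 1) → f x = 1 := by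
    intro x hx
    apply hf 1
    rw [hD1]
    refine ⟨trivial, ?_⟩
    intro hmem
    simp only [Set.mem_iUnion] at hmem
    obtain ⟨i, hi, hxD⟩ := hmem
    rw [hD i hi] at hxD
    obtain ⟨hxU, hx1⟩ := hxD
    simp only [Set.mem_iUnion] at hxU
    obtain ⟨X, hXS, hxX⟩ := hxU
    exact hx1 (hx i X hi hXS hxX)
  have hfiff : ∀ (x : G) (i : H), i ≠ 1 → (f x = i ↔ ∃ X ∈ S i, x ∈ X ∧ x ≠ 1) := by
    intro x i hi
    constructor
    · intro hfx
      by_cases hx : ∀ (k : H) (X : Subgroup G), k ≠ 1 → X ∈ S k → x ∈ X → x = 1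
      · exact absurd (hf1 x hx) (hfx ▸ hi)
      · push_neg at hx
        obtain ⟨k, X, hk, hXS, hxX, hx1⟩ := hx
        have := hfval k X hk hXS x hxX hx1
        rw [hfx] at this
        exact ⟨X, by rwa [← this] at hXS, hxX, hx1⟩
    · rintro ⟨X, hXS, hxX, hx1⟩
      exact hfval i X hi hXS x hxX hx1
  -- subgroup cardinality as filter
  have hsubcard : ∀ X : Subgroup G, (Finset.univ.filter fun x : G => x ∈ X).card = Nat.card X := by
    intro X
    rw [Nat.card_eq_fintype_card]
    exact (Fintype.card_subtype (· ∈ X)).symm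
  have hpair : ∀ X Y : Subgroup G, X ⊓ Y = ⊥ → Nat.card X = q * N → Nat.card Y = q * N →
      ∃! x : G, x ∈ X ∧ x * z ∈ Y := by
    intro X Y hbot hcX hcY
    exact aux_existsUnique X Y hbot (by rw [hcX, hcY, hGcard]; ring) z
  -- cell counts
  set C : H → H → ℕ := fun i j =>
    (Finset.univ.filter fun x : G => f x = i ∧ f (x * z) = j).card with hCdef
  set R : H → ℕ := fun i => (Finset.univ.filter fun x : G => f x = i).card with hRdef
  set W : Finset H := Finset.univ.erase 1 with hWdef
  have hWmem : ∀ i : H, i ∈ W ↔ i ≠ 1 := by intro i; simp [hWdef]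
  have hWcard : W.card + 1 = q := by
    rw [hWdef, Finset.card_erase_of_mem (Finset.mem_univ 1), Finset.card_univ, hH]
    omega
  -- total count
  have htotal : Nat.card {x : G | f (x * z) * (f x)⁻¹ = b} = ∑ i : H, C i (b * i) := by
    have h0 : Nat.card {x : G | f (x * z) * (f x)⁻¹ = b}
        = (Finset.univ.filter fun x : G => f (x * z) * (f x)⁻¹ = b).card := by
      rw [Nat.card_eq_fintype_card]
      convert Fintype.card_subtype (fun x : G => f (x * z) * (f x)⁻¹ = b) using 1
      exact Fintype.card_congr (Equiv.refl _)
    rw [h0, Finset.card_eq_sum_card_fiberwise (f := f) (t := Finset.univ)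
      (fun x _ => Finset.mem_univ _)]
    refine Finset.sum_congr rfl fun i _ => congrArg Finset.card ?_
    ext x
    simp only [Finset.mem_filter, Finset.mem_univ, true_and, Finset.filter_filter, hCdef]
    constructor
    · rintro ⟨hb, hi⟩
      refine ⟨hi, ?_⟩
      rw [hi] at hb
      rw [← hb]
      group
    · rintro ⟨hi, hj⟩
      refine ⟨?_, hi⟩
      rw [hi, hj]
      group
  -- row sums
  have hrowsum : ∀ i : H, R i = ∑ j : H, C i j := by
    intro i
    show (Finset.univ.filter fun x : G => f x = i).card = ∑ j : H, C i j
    rw [Finset.card_eq_sum_card_fiberwise (f := fun x => f (x * z)) (t := Finset.univ)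
      (fun x _ => Finset.mem_univ _)]
    exact Finset.sum_congr rfl fun j _ => by rw [Finset.filter_filter]
  -- column sums
  have hcolsum : ∀ j : H, R j = ∑ i : H, C i j := by
    intro j
    have h1 : R j = (Finset.univ.filter fun x : G => f (x * z) = j).card := by
      show (Finset.univ.filter fun x : G => f x = j).card
        = (Finset.univ.filter fun x : G => f (x * z) = j).card
      apply Finset.card_bij (fun (x : G) _ => x * z⁻¹)
      · intro x hx
        simp only [Finset.mem_filter, Finset.mem_univ, true_and] at hx ⊢
        rw [inv_mul_cancel_right]
        exact hx
      · intro x _ y _ hxy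
        exact mul_right_cancel hxy
      · intro y hy
        simp only [Finset.mem_filter, Finset.mem_univ, true_and] at hy
        refine ⟨y * z, ?_, by rw [mul_inv_cancel_right]⟩
        simp only [Finset.mem_filter, Finset.mem_univ, true_and]
        exact hy
    rw [h1, Finset.card_eq_sum_card_fiberwise (f := f) (t := Finset.univ)
      (fun x _ => Finset.mem_univ _)]
    refine Finset.sum_congr rfl fun i _ => congrArg Finset.card ?_
    rw [Finset.filter_filter]
    ext x
    simp only [Finset.mem_filter, hCdef]
    tauto
  -- row values
  have hRval : ∀ i : H, i ≠ 1 → R i + N = N * (q * N) := by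
    intro i hi
    have hsplit : (Finset.univ.filter fun x : G => f x = i)
        = (S i).biUnion (fun X => Finset.univ.filter fun x : G => x ∈ X ∧ x ≠ 1) := by
      ext x
      simp only [Finset.mem_filter, Finset.mem_univ, true_and, Finset.mem_biUnion]
      rw [hfiff x i hi]
    have hdisj : ∀ X ∈ S i, ∀ Y ∈ S i, X ≠ Y →
        Disjoint (Finset.univ.filter fun x : G => x ∈ X ∧ x ≠ 1)
          (Finset.univ.filter fun x : G => x ∈ Y ∧ x ≠ 1) := by
      intro X hX Y hY hXY
      rw [Finset.disjoint_left]
      intro x hx hy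
      simp only [Finset.mem_filter, Finset.mem_univ, true_and] at hx hy
      exact hXY (huniq x hx.2 i i X Y hi hi hX hY hx.1 hy.1).2
    have hXcard : ∀ X ∈ S i, (Finset.univ.filter fun x : G => x ∈ X ∧ x ≠ 1).card + 1 = q * N := by
      intro X hX
      have h1 : (Finset.univ.filter fun x : G => x ∈ X ∧ x ≠ 1)
          = (Finset.univ.filter fun x : G => x ∈ X) \ {1} := by
        ext x
        simp only [Finset.mem_filter, Finset.mem_univ, true_and, Finset.mem_sdiff,
          Finset.mem_singleton]
      rw [h1, Finset.card_sdiff_of_subset (by simp [Finset.singleton_subset_iff, X.one_mem])]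
      rw [Finset.card_singleton, hsubcard X, hSorder i hi X hX]
      omega
    show (Finset.univ.filter fun x : G => f x = i).card + N = N * (q * N)
    rw [hsplit, Finset.card_biUnion hdisj]
    have : ∀ X ∈ S i, (Finset.univ.filter fun x : G => x ∈ X ∧ x ≠ 1).card = q * N - 1 := by
      intro X hX; have := hXcard X hX; omega
    rw [Finset.sum_congr rfl this, Finset.sum_const, hScard i hi, smul_eq_mul]
    have h2 : q * N - 1 + 1 = q * N := by omega
    calc N * (q * N - 1) + N = N * (q * N - 1 + 1) := by ring
      _ = N * (q * N) := by rw [h2]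
  -- total of rows
  have hRtot : ∑ i : H, R i = (q * N) ^ 2 := by
    have := Finset.card_eq_sum_card_fiberwise (s := (Finset.univ : Finset G))
      (f := f) (t := Finset.univ) (fun x _ => Finset.mem_univ _)
    rw [Finset.card_univ, hG] at this
    rw [← this]
  -- the pair-count function
  set P2 : Subgroup G → Subgroup G → ℕ := fun X Y =>
    if X = Y then (if z ∈ X then q * N - 2 else 0)
    else (if z ∈ X ∨ z ∈ Y then 0 else 1) with hP2def
  -- interior cell formula
  have hcell : ∀ i j : H, i ≠ 1 → j ≠ 1 → C i j = ∑ u ∈ S i ×ˢ S j, P2 u.1 u.2 := by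
    intro i j hi hj
    have hsplit : (Finset.univ.filter fun x : G => f x = i ∧ f (x * z) = j)
        = (S i ×ˢ S j).biUnion (fun u => Finset.univ.filter fun x : G =>
            x ∈ u.1 ∧ x * z ∈ u.2 ∧ x ≠ 1 ∧ x * z ≠ 1) := by
      ext x
      simp only [Finset.mem_filter, Finset.mem_univ, true_and, Finset.mem_biUnion,
        Finset.mem_product]
      rw [hfiff x i hi, hfiff (x * z) j hj]
      constructor
      · rintro ⟨⟨X, hXS, hxX, hx1⟩, ⟨Y, hYS, hxY, hy1⟩⟩
        exact ⟨⟨X, Y⟩, ⟨hXS, hYS⟩, hxX, hxY, hx1, hy1⟩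
      · rintro ⟨⟨X, Y⟩, ⟨hXS, hYS⟩, hxX, hxY, hx1, hy1⟩
        exact ⟨⟨X, hXS, hxX, hx1⟩, ⟨Y, hYS, hxY, hy1⟩⟩
    have hdisj : ∀ u ∈ S i ×ˢ S j, ∀ v ∈ S i ×ˢ S j, u ≠ v →
        Disjoint (Finset.univ.filter fun x : G =>
            x ∈ u.1 ∧ x * z ∈ u.2 ∧ x ≠ 1 ∧ x * z ≠ 1)
          (Finset.univ.filter fun x : G =>
            x ∈ v.1 ∧ x * z ∈ v.2 ∧ x ≠ 1 ∧ x * z ≠ 1) := by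
      intro u hu v hv huv
      rw [Finset.mem_product] at hu hv
      rw [Finset.disjoint_left]
      intro x hxu hxv
      simp only [Finset.mem_filter, Finset.mem_univ, true_and] at hxu hxv
      obtain ⟨h1, h2, h3, h4⟩ := hxu
      obtain ⟨h1', h2', h3', h4'⟩ := hxv
      have e1 := (huniq x h3 i i u.1 v.1 hi hi hu.1 hv.1 h1 h1').2
      have e2 := (huniq (x * z) h4 j j u.2 v.2 hj hj hu.2 hv.2 h2 h2').2
      exact huv (Prod.ext e1 e2)
    show (Finset.univ.filter fun x : G => f x = i ∧ f (x * z) = j).card = _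
    rw [hsplit, Finset.card_biUnion hdisj]
    refine Finset.sum_congr rfl fun u hu => ?_
    rw [Finset.mem_product] at hu
    obtain ⟨X, Y⟩ := u
    obtain ⟨hXS, hYS⟩ := hu
    dsimp only at hXS hYS ⊢
    by_cases hXY : X = Y
    · subst hXY
      by_cases hzX : z ∈ X
      · have hfe : (Finset.univ.filter fun x : G =>
            x ∈ X ∧ x * z ∈ X ∧ x ≠ 1 ∧ x * z ≠ 1)
            = (Finset.univ.filter fun x : G => x ∈ X) \ {1, z⁻¹} := by
          ext x
          simp only [Finset.mem_filter, Finset.mem_univ, true_and, Finset.mem_sdiff,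
            Finset.mem_insert, Finset.mem_singleton]
          constructor
          · rintro ⟨h1, h2, h3, h4⟩
            push_neg
            exact ⟨h1, h3, fun he => h4 (by rw [he]; group)⟩
          · rintro ⟨h1, h2⟩
            push_neg at h2
            exact ⟨h1, X.mul_mem h1 hzX, h2.1, fun he => h2.2 (eq_inv_of_mul_eq_one_left he)⟩
        have hsub : ({1, z⁻¹} : Finset G) ⊆ Finset.univ.filter fun x : G => x ∈ X := by
          rw [Finset.insert_subset_iff, Finset.singleton_subset_iff]
          constructor <;> simp only [Finset.mem_filter, Finset.mem_univ, true_and]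
          · exact X.one_mem
          · exact X.inv_mem hzX
        have h1z : (1 : G) ≠ z⁻¹ := by
          intro h
          exact hz (by rw [← inv_inv z, ← h, inv_one])
        rw [hfe, Finset.card_sdiff_of_subset hsub, Finset.card_pair h1z, hsubcard X,
          hSorder i hi X hXS]
        simp [hP2def, hzX]
      · have hfe : (Finset.univ.filter fun x : G =>
            x ∈ X ∧ x * z ∈ X ∧ x ≠ 1 ∧ x * z ≠ 1) = ∅ := by
          rw [Finset.filter_eq_empty_iff]
          rintro x - ⟨h1, h2, -, -⟩
          exact hzX (by simpa using X.mul_mem (X.inv_mem h1) h2)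
        rw [hfe]
        simp [hP2def, hzX]
    · have hbot := hSint i j hi hj X hXS Y hYS hXY
      obtain ⟨x₀, hx₀, hx₀u⟩ := hpair X Y hbot (hSorder i hi X hXS) (hSorder j hj Y hYS)
      by_cases hzY : z ∈ Y
      · have hfe : (Finset.univ.filter fun x : G =>
            x ∈ X ∧ x * z ∈ Y ∧ x ≠ 1 ∧ x * z ≠ 1) = ∅ := by
          rw [Finset.filter_eq_empty_iff]
          rintro x - ⟨h1, h2, h3, -⟩
          have e1 := hx₀u x ⟨h1, h2⟩
          have e2 := hx₀u 1 ⟨X.one_mem, by simpa using hzY⟩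
          exact h3 (e1.trans e2.symm)
        rw [hfe]
        simp [hP2def, hXY, hzY]
      · by_cases hzX : z ∈ X
        · have hfe : (Finset.univ.filter fun x : G =>
              x ∈ X ∧ x * z ∈ Y ∧ x ≠ 1 ∧ x * z ≠ 1) = ∅ := by
            rw [Finset.filter_eq_empty_iff]
            rintro x - ⟨h1, h2, -, h4⟩
            have e1 := hx₀u x ⟨h1, h2⟩
            have e2 := hx₀u z⁻¹ ⟨X.inv_mem hzX, by simpa using Y.one_mem⟩
            exact h4 (by rw [e1.trans e2.symm]; group)
          rw [hfe]
          simp [hP2def, hXY, hzX]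
        · have hfe : (Finset.univ.filter fun x : G =>
              x ∈ X ∧ x * z ∈ Y ∧ x ≠ 1 ∧ x * z ≠ 1) = {x₀} := by
            ext x
            simp only [Finset.mem_filter, Finset.mem_univ, true_and, Finset.mem_singleton]
            constructor
            · rintro ⟨h1, h2, -, -⟩
              exact hx₀u x ⟨h1, h2⟩
            · rintro rfl
              refine ⟨hx₀.1, hx₀.2, ?_, ?_⟩
              · intro h
                rw [h] at hx₀
                exact hzY (by simpa using hx₀.2)
              · intro h
                have h2 := eq_inv_of_mul_eq_one_left h
                rw [h2] at hx₀
                exact hzX (by simpa using hx₀.1)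
          rw [hfe, Finset.card_singleton]
          simp [hP2def, hXY, hzX, hzY]
  -- diagonal indicator sum
  have hinter : ∀ i j : H, i ≠ 1 → j ≠ 1 →
      ∑ u ∈ S i ×ˢ S j, (if u.1 = u.2 then (1:ℕ) else 0) = (if i = j then N else 0) := by
    intro i j hi hj
    rw [Finset.sum_product]
    have h1 : ∀ x ∈ S i, ∑ y ∈ S j, (if x = y then (1:ℕ) else 0)
        = (if x ∈ S j then 1 else 0) := fun x _ => Finset.sum_ite_eq (S j) x (fun _ => 1)
    rw [Finset.sum_congr rfl h1]
    by_cases hij : i = j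
    · subst hij
      rw [Finset.sum_congr rfl (fun x hx => if_pos hx), Finset.sum_const, hScard i hi,
        smul_eq_mul, mul_one, if_pos rfl]
    · rw [Finset.sum_congr rfl (fun x hx => if_neg
        (fun hxj => Finset.disjoint_left.mp (hSdisj i j hi hj hij) hx hxj)),
        Finset.sum_const_zero, if_neg hij]
  rw [htotal]
  clear_value C R W P2
  -- split off the i = 1 term
  have hsplit1 : ∑ i : H, C i (b * i) = C 1 b + ∑ i ∈ W, C i (b * i) := by
    rw [hWdef]
    have := (Finset.add_sum_erase Finset.univ (fun i => C i (b * i)) (Finset.mem_univ 1)).symm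
    simpa using this
  have hC1b : C 1 b + ∑ i ∈ W, C i b = R b := by
    rw [hcolsum b, hWdef]
    exact Finset.add_sum_erase Finset.univ (fun i => C i b) (Finset.mem_univ 1)
  have hrow1 : ∀ a : H, C a 1 + ∑ j ∈ W, C a j = R a := by
    intro a
    rw [hrowsum a, hWdef]
    exact Finset.add_sum_erase Finset.univ (fun j => C a j) (Finset.mem_univ 1)
  -- bridges
  have B1 : W.card * (N * N) + N * N = q * (N * N) := by rw [← hWcard]; ring
  have B2' : W.card * (W.card * (N * N)) + W.card * (N * N) = W.card * (q * (N * N)) := by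
    rw [← hWcard]; ring
  have B5 : W.card * (q * (N * N)) + q * (N * N) = q * (q * (N * N)) := by rw [← hWcard]; ring
  have B7 : W.card * N + N = q * N := by rw [← hWcard]; ring
  have B3 : N * (q * N) = q * (N * N) := by ring
  have B3' : W.card * (N * (q * N)) = W.card * (q * (N * N)) := by ring
  have B6 : (q * N) ^ 2 = q * (q * (N * N)) := by ring
  have B4 : q * N ^ 2 = q * (N * N) := by ring
  have B8 : W.card * (2 * N) = 2 * (W.card * N) := by ring
  have hX : ∑ j ∈ W, C 1 j + ∑ j ∈ W, (∑ i ∈ W, C i j) = ∑ j ∈ W, R j := by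
    have h : ∀ j ∈ W, C 1 j + ∑ i ∈ W, C i j = R j := by
      intro j hjW
      rw [hcolsum j, hWdef]
      exact Finset.add_sum_erase Finset.univ (fun i => C i j) (Finset.mem_univ 1)
    rw [← Finset.sum_add_distrib]
    exact Finset.sum_congr rfl h
  have hRW : ∑ j ∈ W, R j + W.card * N = W.card * (N * (q * N)) := by
    have hs := Finset.sum_congr rfl (fun j (hjW : j ∈ W) => hRval j ((hWmem j).mp hjW))
    rw [Finset.sum_add_distrib, Finset.sum_const, Finset.sum_const, smul_eq_mul,
      smul_eq_mul] at hs
    linarith only [hs]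
  have hR1 : R 1 + ∑ j ∈ W, R j = (q * N) ^ 2 := by
    rw [← hRtot, hWdef]
    exact Finset.add_sum_erase Finset.univ R (Finset.mem_univ 1)
  by_cases hhome : ∃ i₀ : H, i₀ ≠ 1 ∧ ∃ Z₀ ∈ S i₀, z ∈ Z₀
  · -- z lies in a (unique) spread subgroup
    obtain ⟨i₀, hi₀, Z₀, hZ₀S, hzZ₀⟩ := hhome
    have hZS : ∀ k : H, k ≠ 1 → (Z₀ ∈ S k ↔ k = i₀) := by
      intro k hk
      constructor
      · intro h; exact (huniq z hz k i₀ Z₀ Z₀ hk hi₀ h hZ₀S hzZ₀ hzZ₀).1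
      · rintro rfl; exact hZ₀S
    have hzmem : ∀ (k : H) (X : Subgroup G), k ≠ 1 → X ∈ S k → (z ∈ X ↔ X = Z₀) := by
      intro k X hk hXS
      constructor
      · intro h; exact (huniq z hz k i₀ X Z₀ hk hi₀ hXS hZ₀S h hzZ₀).2
      · rintro rfl; exact hzZ₀
    have hi₀W : i₀ ∈ W := (hWmem i₀).mpr hi₀
    have hterm : ∀ i j : H, i ≠ 1 → j ≠ 1 →
        C i j + (if i = j then N else 0) + (if i = i₀ then N else 0)
          + (if j = i₀ then N else 0)
          = N * N + (if i = i₀ ∧ j = i₀ then q * N else 0) := by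
      intro i j hi hj
      have key : ∀ u ∈ S i ×ˢ S j,
          P2 u.1 u.2 + (if u.1 = u.2 then 1 else 0) + (if u.1 = Z₀ then 1 else 0)
            + (if u.2 = Z₀ then 1 else 0)
            = 1 + (if u.1 = Z₀ ∧ u.2 = Z₀ then q * N else 0) := by
        intro u hu
        rw [Finset.mem_product] at hu
        have hz1 : z ∈ u.1 ↔ u.1 = Z₀ := hzmem i u.1 hi hu.1
        have hz2 : z ∈ u.2 ↔ u.2 = Z₀ := hzmem j u.2 hj hu.2
        by_cases hXY : u.1 = u.2
        · by_cases hXZ : u.1 = Z₀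
          · have hYZ : u.2 = Z₀ := hXY ▸ hXZ
            have hzx : z ∈ u.1 := hz1.mpr hXZ
            simp only [hP2def, if_pos hXY, if_pos hzx, if_pos hXZ, if_pos hYZ,
              if_pos (⟨hXZ, hYZ⟩ : u.1 = Z₀ ∧ u.2 = Z₀)]
            omega
          · have hYZ : u.2 ≠ Z₀ := fun h => hXZ (hXY ▸ h)
            have hzx : z ∉ u.1 := fun h => hXZ (hz1.mp h)
            simp [hP2def, if_pos hXY, hzx, hXZ, hYZ]
        · by_cases hXZ : u.1 = Z₀
          · have hYZ : u.2 ≠ Z₀ := fun h => hXY (by rw [hXZ, h])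
            have hzx : z ∈ u.1 := hz1.mpr hXZ
            simp [hP2def, hXY, hzx, hXZ, hYZ, hzZ₀,
              show Z₀ ≠ u.2 from fun h => hXY (hXZ.trans h)]
          · by_cases hYZ : u.2 = Z₀
            · have hzy : z ∈ u.2 := hz2.mpr hYZ
              simp [hP2def, hXY, hzy, hXZ, hYZ, hzZ₀]
            · have hzx : z ∉ u.1 := fun h => hXZ (hz1.mp h)
              have hzy : z ∉ u.2 := fun h => hYZ (hz2.mp h)
              simp [hP2def, hXY, hzx, hzy, hXZ, hYZ]
      have hs : ∑ u ∈ S i ×ˢ S j, (P2 u.1 u.2 + (if u.1 = u.2 then 1 else 0)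
          + (if u.1 = Z₀ then 1 else 0) + (if u.2 = Z₀ then 1 else 0))
          = ∑ u ∈ S i ×ˢ S j, (1 + (if u.1 = Z₀ ∧ u.2 = Z₀ then q * N else 0)) :=
        Finset.sum_congr rfl key
      rw [Finset.sum_add_distrib, Finset.sum_add_distrib, Finset.sum_add_distrib,
        Finset.sum_add_distrib] at hs
      have h2 : ∑ u ∈ S i ×ˢ S j, (if u.1 = Z₀ then (1:ℕ) else 0)
          = (if i = i₀ then N else 0) := by
        rw [Finset.sum_product]
        have inner : ∀ x ∈ S i, ∑ _y ∈ S j, (if x = Z₀ then (1:ℕ) else 0)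
            = (if x = Z₀ then N else 0) := by
          intro x _
          rw [Finset.sum_const, hScard j hj, smul_eq_mul]
          by_cases hx : x = Z₀ <;> simp [hx]
        rw [Finset.sum_congr rfl inner, Finset.sum_ite_eq' (S i) Z₀ (fun _ => N)]
        exact if_congr (hZS i hi) rfl rfl
      have h3 : ∑ u ∈ S i ×ˢ S j, (if u.2 = Z₀ then (1:ℕ) else 0)
          = (if j = i₀ then N else 0) := by
        rw [Finset.sum_product]
        have inner : ∀ x ∈ S i, ∑ y ∈ S j, (if y = Z₀ then (1:ℕ) else 0)
            = (if j = i₀ then 1 else 0) := by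
          intro x _
          rw [Finset.sum_ite_eq' (S j) Z₀ (fun _ => 1)]
          exact if_congr (hZS j hj) rfl rfl
        rw [Finset.sum_congr rfl inner, Finset.sum_const, hScard i hi, smul_eq_mul]
        by_cases hj' : j = i₀ <;> simp [hj']
      have h4 : ∑ u ∈ S i ×ˢ S j, (if u.1 = Z₀ ∧ u.2 = Z₀ then q * N else 0)
          = (if i = i₀ ∧ j = i₀ then q * N else 0) := by
        have hcond : ∀ u : Subgroup G × Subgroup G,
            (u.1 = Z₀ ∧ u.2 = Z₀) ↔ u = (Z₀, Z₀) := fun u =>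
          ⟨fun h => Prod.ext h.1 h.2, fun h => by rw [h]; exact ⟨rfl, rfl⟩⟩
        rw [Finset.sum_congr rfl (fun u _ => if_congr (hcond u) rfl rfl),
          Finset.sum_ite_eq' (S i ×ˢ S j) (Z₀, Z₀) (fun _ => q * N)]
        exact if_congr (Finset.mem_product.trans (and_congr (hZS i hi) (hZS j hj))) rfl rfl
      rw [hinter i j hi hj, h2, h3, h4, Finset.sum_const,
        Finset.card_product, hScard i hi, hScard j hj, smul_eq_mul, mul_one] at hs
      rw [hcell i j hi hj]
      linarith only [hs]
    -- diagonal terms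
    have hdiagterm : ∀ i ∈ W, C i i + N + (if i = i₀ then 2 * N else 0)
        = N * N + (if i = i₀ then q * N else 0) := by
      intro i hiW
      have hi1 := (hWmem i).mp hiW
      have h := hterm i i hi1 hi1
      by_cases hio : i = i₀
      · simp [hio] at h ⊢
        linarith only [h]
      · simp [hio] at h ⊢
        linarith only [h]
    have hcolV : ∀ j, j ≠ 1 → (∑ i ∈ W, C i j) + 2 * N + (if j = i₀ then W.card * N else 0)
        = W.card * (N * N) + (if j = i₀ then q * N else 0) := by
      intro j hj
      have h : ∀ i ∈ W, C i j + ((if i = j then N else 0) + (if i = i₀ then N else 0)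
          + (if j = i₀ then N else 0))
          = N * N + (if i = i₀ ∧ j = i₀ then q * N else 0) := by
        intro i hiW
        have h := hterm i j ((hWmem i).mp hiW) hj
        linarith only [h]
      have hs := Finset.sum_congr rfl h
      rw [Finset.sum_add_distrib, Finset.sum_add_distrib, Finset.sum_add_distrib,
        Finset.sum_add_distrib,
        Finset.sum_ite_eq' W j (fun _ => N), if_pos ((hWmem j).mpr hj),
        Finset.sum_ite_eq' W i₀ (fun _ => N), if_pos hi₀W,
        Finset.sum_const, Finset.sum_const, smul_eq_mul, smul_eq_mul] at hs
      have e3 : ∑ i ∈ W, (if i = i₀ ∧ j = i₀ then q * N else 0)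
          = (if j = i₀ then q * N else 0) := by
        by_cases hjo : j = i₀
        · have hc : ∀ i : H, (i = i₀ ∧ j = i₀) ↔ (i = i₀) := fun i => by simp [hjo]
          rw [Finset.sum_congr rfl (fun i _ => if_congr (hc i) rfl rfl),
            Finset.sum_ite_eq' W i₀ (fun _ => q * N), if_pos hi₀W, if_pos hjo]
        · simp [hjo]
      have e4 : W.card * (if j = i₀ then N else 0)
          = (if j = i₀ then W.card * N else 0) := by
        by_cases hjo : j = i₀ <;> simp [hjo]
      rw [e3, e4] at hs
      linarith only [hs]
    have hrowV : ∀ a, a ≠ 1 → (∑ j ∈ W, C a j) + 2 * N + (if a = i₀ then W.card * N else 0)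
        = W.card * (N * N) + (if a = i₀ then q * N else 0) := by
      intro a ha
      have h : ∀ j ∈ W, C a j + ((if a = j then N else 0) + (if j = i₀ then N else 0)
          + (if a = i₀ then N else 0))
          = N * N + (if a = i₀ ∧ j = i₀ then q * N else 0) := by
        intro j hjW
        have h := hterm a j ha ((hWmem j).mp hjW)
        linarith only [h]
      have hs := Finset.sum_congr rfl h
      rw [Finset.sum_add_distrib, Finset.sum_add_distrib, Finset.sum_add_distrib,
        Finset.sum_add_distrib,
        Finset.sum_ite_eq W a (fun _ => N), if_pos ((hWmem a).mpr ha),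
        Finset.sum_ite_eq' W i₀ (fun _ => N), if_pos hi₀W,
        Finset.sum_const, Finset.sum_const, smul_eq_mul, smul_eq_mul] at hs
      have e3 : ∑ j ∈ W, (if a = i₀ ∧ j = i₀ then q * N else 0)
          = (if a = i₀ then q * N else 0) := by
        by_cases hao : a = i₀
        · have hc : ∀ j : H, (a = i₀ ∧ j = i₀) ↔ (j = i₀) := fun j => by simp [hao]
          rw [Finset.sum_congr rfl (fun j _ => if_congr (hc j) rfl rfl),
            Finset.sum_ite_eq' W i₀ (fun _ => q * N), if_pos hi₀W, if_pos hao]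
        · simp [hao]
      have e4 : W.card * (if a = i₀ then N else 0)
          = (if a = i₀ then W.card * N else 0) := by
        by_cases hao : a = i₀ <;> simp [hao]
      rw [e3, e4] at hs
      linarith only [hs]
    by_cases hb : b = 1
    · subst hb
      simp only [one_mul] at hsplit1 ⊢
      rw [hsplit1]
      have hdiag : (∑ i ∈ W, C i i) + W.card * N + 2 * N
          = W.card * (N * N) + q * N := by
        have hs := Finset.sum_congr rfl hdiagterm
        rw [Finset.sum_add_distrib, Finset.sum_add_distrib,
          Finset.sum_ite_eq' W i₀ (fun _ => 2 * N), if_pos hi₀W,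
          Finset.sum_add_distrib,
          Finset.sum_ite_eq' W i₀ (fun _ => q * N), if_pos hi₀W,
          Finset.sum_const, Finset.sum_const, smul_eq_mul, smul_eq_mul] at hs
        linarith only [hs]
      have hDD : (∑ j ∈ W, ∑ i ∈ W, C i j) + W.card * (2 * N) + W.card * N
          = W.card * (W.card * (N * N)) + q * N := by
        have h : ∀ j ∈ W, (∑ i ∈ W, C i j) + 2 * N + (if j = i₀ then W.card * N else 0)
            = W.card * (N * N) + (if j = i₀ then q * N else 0) :=
          fun j hjW => hcolV j ((hWmem j).mp hjW)
        have hs := Finset.sum_congr rfl h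
        rw [Finset.sum_add_distrib, Finset.sum_add_distrib,
          Finset.sum_ite_eq' W i₀ (fun _ => W.card * N), if_pos hi₀W,
          Finset.sum_add_distrib,
          Finset.sum_ite_eq' W i₀ (fun _ => q * N), if_pos hi₀W,
          Finset.sum_const, Finset.sum_const, smul_eq_mul, smul_eq_mul] at hs
        linarith only [hs]
      have hC11 := hrow1 1
      linarith only [hdiag, hX, hDD, hRW, hR1, hC11, B1, B2', B5, B3', B6, B4, B7, B8]
    · have hbinv : b⁻¹ ≠ 1 := fun h => hb (inv_eq_one.mp h)
      have hbinvW : b⁻¹ ∈ W := (hWmem b⁻¹).mpr hbinv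
      have hsplit2 : ∑ i ∈ W, C i (b * i)
          = C b⁻¹ 1 + ∑ i ∈ W.erase b⁻¹, C i (b * i) := by
        have := (Finset.add_sum_erase W (fun i => C i (b * i)) hbinvW).symm
        simpa using this
      have hecard : (W.erase b⁻¹).card + 2 = q := by
        rw [Finset.card_erase_of_mem hbinvW]; omega
      have B2 : (W.erase b⁻¹).card * (N * N) + 2 * (N * N) = q * (N * N) := by
        rw [← hecard]; ring
      have hDS : (∑ i ∈ W.erase b⁻¹, C i (b * i)) + (if b⁻¹ = i₀ then 0 else N)
          + (if b = i₀ then 0 else N) = (W.erase b⁻¹).card * (N * N) := by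
        have h : ∀ i ∈ W.erase b⁻¹, C i (b * i) + ((if i = i₀ then N else 0)
            + (if b * i = i₀ then N else 0)) = N * N := by
          intro i hiE
          rw [Finset.mem_erase] at hiE
          have hi1 : i ≠ 1 := (hWmem i).mp hiE.2
          have hbi1 : b * i ≠ 1 := fun h => hiE.1 (eq_inv_of_mul_eq_one_right h)
          have h := hterm i (b * i) hi1 hbi1
          rw [if_neg (fun hh : i = b * i => hb (right_eq_mul.mp hh)),
            if_neg (fun hh : i = i₀ ∧ b * i = i₀ => hb
              (mul_eq_right.mp (hh.1 ▸ hh.2)))] at h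
          linarith only [h]
        have hs := Finset.sum_congr rfl h
        have e1 : ∑ i ∈ W.erase b⁻¹, (if i = i₀ then N else 0)
            = (if b⁻¹ = i₀ then 0 else N) := by
          rw [Finset.sum_ite_eq' (W.erase b⁻¹) i₀ (fun _ => N)]
          by_cases hbo : b⁻¹ = i₀
          · rw [if_neg (fun hmem => (Finset.mem_erase.mp hmem).1 hbo.symm), if_pos hbo]
          · rw [if_pos (Finset.mem_erase.mpr ⟨fun h => hbo h.symm, hi₀W⟩), if_neg hbo]
        have e2 : ∑ i ∈ W.erase b⁻¹, (if b * i = i₀ then N else 0)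
            = (if b = i₀ then 0 else N) := by
          have hcond : ∀ i : H, (if b * i = i₀ then N else 0)
              = (if i = b⁻¹ * i₀ then N else 0) :=
            fun i => if_congr (Iff.symm eq_inv_mul_iff_mul_eq) rfl rfl
          rw [Finset.sum_congr rfl (fun i _ => hcond i),
            Finset.sum_ite_eq' (W.erase b⁻¹) (b⁻¹ * i₀) (fun _ => N)]
          by_cases hbo : b = i₀
          · rw [if_neg, if_pos hbo]
            intro hmem
            have h1 : b⁻¹ * i₀ = 1 := by rw [← hbo, inv_mul_cancel]
            exact ((hWmem _).mp (Finset.mem_erase.mp hmem).2) h1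
          · rw [if_pos, if_neg hbo]
            refine Finset.mem_erase.mpr ⟨?_, (hWmem _).mpr ?_⟩
            · intro h
              exact hi₀ (mul_left_cancel (h.trans (mul_one b⁻¹).symm))
            · intro h
              have h2 := eq_inv_of_mul_eq_one_right h
              rw [inv_inv] at h2
              exact hbo h2.symm
        rw [Finset.sum_add_distrib, Finset.sum_add_distrib, e1, e2,
          Finset.sum_const, smul_eq_mul] at hs
        linarith only [hs]
      rw [hsplit1, hsplit2]
      have hcV := hcolV b hb
      have hrV := hrowV b⁻¹ hbinv
      have h1 := hC1b
      have h2 := hrow1 b⁻¹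
      have hRb := hRval b hb
      have hRb' := hRval b⁻¹ hbinv
      by_cases hbo : b = i₀ <;> by_cases hbo2 : b⁻¹ = i₀
      · rw [if_pos hbo, if_pos hbo] at hcV
        rw [if_pos hbo2, if_pos hbo2] at hrV
        rw [if_pos hbo2, if_pos hbo] at hDS
        linarith only [h1, h2, hRb, hRb', hcV, hrV, hDS, B1, B2, B3, B4, B7]
      · rw [if_pos hbo, if_pos hbo] at hcV
        rw [if_neg hbo2, if_neg hbo2] at hrV
        rw [if_neg hbo2, if_pos hbo] at hDS
        linarith only [h1, h2, hRb, hRb', hcV, hrV, hDS, B1, B2, B3, B4, B7]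
      · rw [if_neg hbo, if_neg hbo] at hcV
        rw [if_pos hbo2, if_pos hbo2] at hrV
        rw [if_pos hbo2, if_neg hbo] at hDS
        linarith only [h1, h2, hRb, hRb', hcV, hrV, hDS, B1, B2, B3, B4, B7]
      · rw [if_neg hbo, if_neg hbo] at hcV
        rw [if_neg hbo2, if_neg hbo2] at hrV
        rw [if_neg hbo2, if_neg hbo] at hDS
        linarith only [h1, h2, hRb, hRb', hcV, hrV, hDS, B1, B2, B3, B4, B7]
  · -- z lies in no spread subgroup
    have hzfree : ∀ (k : H) (X : Subgroup G), k ≠ 1 → X ∈ S k → z ∉ X := by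
      intro k X hk hXS hzX
      exact hhome ⟨k, hk, X, hXS, hzX⟩
    have hterm : ∀ i j : H, i ≠ 1 → j ≠ 1 →
        C i j + (if i = j then N else 0) = N * N := by
      intro i j hi hj
      have key : ∀ u ∈ S i ×ˢ S j,
          P2 u.1 u.2 + (if u.1 = u.2 then 1 else 0) = 1 := by
        intro u hu
        rw [Finset.mem_product] at hu
        have hz1 : z ∉ u.1 := hzfree i u.1 hi hu.1
        have hz2 : z ∉ u.2 := hzfree j u.2 hj hu.2
        by_cases hXY : u.1 = u.2
        · simp [hP2def, if_pos hXY, hz1]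
        · simp [hP2def, hXY, hz1, hz2]
      have hs : ∑ u ∈ S i ×ˢ S j, (P2 u.1 u.2 + (if u.1 = u.2 then 1 else 0))
          = ∑ u ∈ S i ×ˢ S j, 1 := Finset.sum_congr rfl key
      rw [Finset.sum_add_distrib, hinter i j hi hj, Finset.sum_const,
        Finset.card_product, hScard i hi, hScard j hj, smul_eq_mul, mul_one] at hs
      rw [hcell i j hi hj]
      linarith only [hs]
    have hcolV : ∀ j, j ≠ 1 → (∑ i ∈ W, C i j) + N = W.card * (N * N) := by
      intro j hj
      have h : ∀ i ∈ W, C i j + (if i = j then N else 0) = N * N :=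
        fun i hiW => hterm i j ((hWmem i).mp hiW) hj
      have hs := Finset.sum_congr rfl h
      rw [Finset.sum_add_distrib, Finset.sum_ite_eq' W j (fun _ => N),
        if_pos ((hWmem j).mpr hj), Finset.sum_const, smul_eq_mul] at hs
      linarith only [hs]
    have hrowV : ∀ a, a ≠ 1 → (∑ j ∈ W, C a j) + N = W.card * (N * N) := by
      intro a ha
      have h : ∀ j ∈ W, C a j + (if a = j then N else 0) = N * N :=
        fun j hjW => hterm a j ha ((hWmem j).mp hjW)
      have hs := Finset.sum_congr rfl h
      rw [Finset.sum_add_distrib, Finset.sum_ite_eq W a (fun _ => N),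
        if_pos ((hWmem a).mpr ha), Finset.sum_const, smul_eq_mul] at hs
      linarith only [hs]
    by_cases hb : b = 1
    · subst hb
      simp only [one_mul] at hsplit1 ⊢
      rw [hsplit1]
      have hdiag : ∑ i ∈ W, C i i + W.card * N = W.card * (N * N) := by
        have h : ∀ i ∈ W, C i i + N = N * N := by
          intro i hiW
          have := hterm i i ((hWmem i).mp hiW) ((hWmem i).mp hiW)
          simpa using this
        have hs := Finset.sum_congr rfl h
        rw [Finset.sum_add_distrib, Finset.sum_const, Finset.sum_const, smul_eq_mul,
          smul_eq_mul] at hs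
        exact hs
      have hDD : ∑ j ∈ W, (∑ i ∈ W, C i j) + W.card * N
          = W.card * (W.card * (N * N)) := by
        have h : ∀ j ∈ W, (∑ i ∈ W, C i j) + N = W.card * (N * N) :=
          fun j hjW => hcolV j ((hWmem j).mp hjW)
        have hs := Finset.sum_congr rfl h
        rw [Finset.sum_add_distrib, Finset.sum_const, Finset.sum_const, smul_eq_mul,
          smul_eq_mul] at hs
        exact hs
      have hC11 := hrow1 1
      linarith only [hdiag, hX, hDD, hRW, hR1, hC11, B1, B2', B5, B3', B6, B4]
    · have hbinv : b⁻¹ ≠ 1 := fun h => hb (inv_eq_one.mp h)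
      have hbinvW : b⁻¹ ∈ W := (hWmem b⁻¹).mpr hbinv
      have hsplit2 : ∑ i ∈ W, C i (b * i)
          = C b⁻¹ 1 + ∑ i ∈ W.erase b⁻¹, C i (b * i) := by
        have := (Finset.add_sum_erase W (fun i => C i (b * i)) hbinvW).symm
        simpa using this
      have hecard : (W.erase b⁻¹).card + 2 = q := by
        rw [Finset.card_erase_of_mem hbinvW]; omega
      have hDS : ∑ i ∈ W.erase b⁻¹, C i (b * i) = (W.erase b⁻¹).card * (N * N) := by
        have h : ∀ i ∈ W.erase b⁻¹, C i (b * i) = N * N := by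
          intro i hiE
          rw [Finset.mem_erase] at hiE
          have hi1 : i ≠ 1 := (hWmem i).mp hiE.2
          have hbi1 : b * i ≠ 1 := fun h => hiE.1 (eq_inv_of_mul_eq_one_right h)
          have h := hterm i (b * i) hi1 hbi1
          rw [if_neg (fun hh : i = b * i => hb (right_eq_mul.mp hh))] at h
          omega
        rw [Finset.sum_congr rfl h, Finset.sum_const, smul_eq_mul]
      rw [hsplit1, hsplit2]
      have B2 : (W.erase b⁻¹).card * (N * N) + 2 * (N * N) = q * (N * N) := by
        rw [← hecard]; ring
      linarith only [hC1b, hrow1 b⁻¹, hRval b hb, hRval b⁻¹ hbinv, hcolV b hb,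
        hrowV b⁻¹ hbinv, hDS, B1, B2, B3, B4]
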